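/- Let k be a field of characteristic p > 0 and A₁(k) the first Weyl algebra with center Z = k[x^p, ∂^p]. The mod-p-reduction Poisson bracket on Z (induced from lifting to the Weyl algebra over a flat Z-algebra, or equivalently defined by {a,b} = (1/p)[ã, b̃] computed in the Weyl algebra over Z/p²-coefficients) satisfies {∂^p, x^p} = 1 (up to sign), so that Z with this bracket is isomorphic as a Poisson algebra to the polynomial ring k[X, Y] with the standard symplectic bracket {Y, X} = 1 (up to sign, where the induced bracket is the negative of the standard one). -/

import Mathlib

/-- The defining relation of the first Weyl algebra: `∂ * x = x * ∂ + 1`,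
where `x = ι false` and `∂ = ι true`. -/
inductive WeylRel (k : Type) [CommRing k] : FreeAlgebra k Bool → FreeAlgebra k Bool → Prop
  | rel : WeylRel k (FreeAlgebra.ι k true * FreeAlgebra.ι k false)
      (FreeAlgebra.ι k false * FreeAlgebra.ι k true + 1)

/-- The first Weyl algebra `A₁(k) = k⟨x, ∂⟩/(∂x - x∂ - 1)`. -/
abbrev Weyl (k : Type) [CommRing k] := RingQuot (WeylRel k)

/-- The generator `x` of the first Weyl algebra. -/
noncomputable def Weyl.x (k : Type) [CommRing k] : Weyl k :=
  RingQuot.mkRingHom (WeylRel k) (FreeAlgebra.ι k false)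

/-- The generator `∂` of the first Weyl algebra. -/
noncomputable def Weyl.d (k : Type) [CommRing k] : Weyl k :=
  RingQuot.mkRingHom (WeylRel k) (FreeAlgebra.ι k true)

noncomputable section
open MvPolynomial

namespace WeylAux

variable (k : Type) [CommRing k]

abbrev M := MvPolynomial (Fin 2) k

def A : Module.End k (M k) := LinearMap.mulLeft k (X 0)

def B : Module.End k (M k) := (pderiv 0 : Derivation k (M k) (M k)).toLinearMap

def Dop : Module.End k (M k) := LinearMap.mulLeft k (X 1) + B k

lemma B_apply (f : M k) : B k f = pderiv 0 f := rfl

lemma Dop_apply (f : M k) : Dop k f = X 1 * f + pderiv 0 f := rfl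

lemma rel_End : Dop k * A k = A k * Dop k + 1 := by
  apply LinearMap.ext
  intro f
  simp only [Module.End.mul_apply, LinearMap.add_apply, A, Dop, B, LinearMap.mulLeft_apply,
    Module.End.one_apply, Derivation.coeFn_coe]
  rw [Derivation.leibniz, pderiv_X_self]
  simp only [smul_eq_mul]
  ring

def F : FreeAlgebra k Bool →ₐ[k] Module.End k (M k) :=
  FreeAlgebra.lift k (fun b => cond b (Dop k) (A k))

lemma hF : ∀ ⦃a b : FreeAlgebra k Bool⦄, WeylRel k a b → F k a = F k b := by
  intro a b h
  cases h
  simp only [F, map_mul, map_add, map_one, FreeAlgebra.lift_ι_apply, cond]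
  exact rel_End k

def φ : Weyl k →ₐ[k] Module.End k (M k) := RingQuot.liftAlgHom k ⟨F k, hF k⟩

lemma mkRingHom_eq (a : FreeAlgebra k Bool) :
    RingQuot.mkRingHom (WeylRel k) a = RingQuot.mkAlgHom k (WeylRel k) a := by
  rw [← RingQuot.mkAlgHom_coe k (WeylRel k)]; rfl

lemma φ_x : φ k (Weyl.x k) = A k := by
  rw [Weyl.x, mkRingHom_eq, φ, RingQuot.liftAlgHom_mkAlgHom_apply, F, FreeAlgebra.lift_ι_apply]
  rfl

lemma φ_d : φ k (Weyl.d k) = Dop k := by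
  rw [Weyl.d, mkRingHom_eq, φ, RingQuot.liftAlgHom_mkAlgHom_apply, F, FreeAlgebra.lift_ι_apply]
  rfl

def ev : Weyl k →ₗ[k] M k := (LinearMap.applyₗ (1 : M k)).comp (φ k).toLinearMap

lemma ev_apply (a : Weyl k) : ev k a = φ k a 1 := rfl

lemma ev_mul (a b : Weyl k) : ev k (a * b) = φ k a (ev k b) := by
  rw [ev_apply, map_mul]; rfl

def xd (m : Fin 2 →₀ ℕ) : Weyl k := Weyl.x k ^ (m 0) * Weyl.d k ^ (m 1)

lemma Dop_pow_one (j : ℕ) : ((Dop k) ^ j) 1 = X 1 ^ j := by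
  induction j with
  | zero => simp
  | succ n ih =>
    rw [pow_succ', Module.End.mul_apply, ih, Dop_apply]
    rw [Derivation.leibniz_pow, pderiv_X_of_ne (by decide)]
    simp [pow_succ']

lemma fin2_decomp (m : Fin 2 →₀ ℕ) :
    Finsupp.single (0 : Fin 2) (m 0) + Finsupp.single 1 (m 1) = m := by
  ext j
  fin_cases j <;> simp [Finsupp.single_apply]

lemma monomial_fin2 (m : Fin 2 →₀ ℕ) (c : k) :
    monomial m c = C c * (X 0 ^ (m 0) * X 1 ^ (m 1)) := by
  conv_lhs => rw [← fin2_decomp m, monomial_single_add, ← C_mul_X_pow_eq_monomial]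
  ring

lemma ev_xd (m : Fin 2 →₀ ℕ) : ev k (xd k m) = monomial m 1 := by
  rw [xd, ev_mul, ev_apply, map_pow, map_pow, φ_x, φ_d, Dop_pow_one]
  have hA : (A k) ^ (m 0) = LinearMap.mulLeft k (X 0 ^ (m 0)) := LinearMap.pow_mulLeft k (M k) (X 0) (m 0)
  rw [hA, LinearMap.mulLeft_apply, monomial_fin2, C_1, one_mul]

def ψ : M k →ₗ[k] Weyl k := (basisMonomials (Fin 2) k).constr ℕ (xd k)

lemma ψ_monomial (m : Fin 2 →₀ ℕ) (c : k) : ψ k (monomial m c) = c • xd k m := by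
  have h1 : monomial m c = c • ((basisMonomials (Fin 2) k) m) := by
    rw [coe_basisMonomials]
    simp [smul_monomial]
  rw [h1, map_smul, ψ, Module.Basis.constr_basis]

lemma ev_comp_ψ : (ev k).comp (ψ k) = LinearMap.id := by
  apply (basisMonomials (Fin 2) k).ext
  intro m
  rw [coe_basisMonomials]
  show ev k (ψ k (monomial m 1)) = monomial m 1
  rw [ψ_monomial, one_smul, ev_xd]

lemma ψ_injective : Function.Injective (ψ k) := by
  have h : Function.LeftInverse (ev k) (ψ k) := fun f => by
    have := congrArg (fun g => g f) (ev_comp_ψ k); simpa using this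
  exact h.injective

/-- The defining relation in the Weyl algebra. -/
lemma weyl_rel : Weyl.d k * Weyl.x k = Weyl.x k * Weyl.d k + 1 := by
  have h := RingQuot.mkRingHom_rel (WeylRel.rel (k := k))
  rw [map_mul, map_add, map_mul, map_one] at h
  exact h

lemma d_xpow (n : ℕ) : Weyl.d k * Weyl.x k ^ (n + 1)
    = Weyl.x k ^ (n + 1) * Weyl.d k + (n + 1) • Weyl.x k ^ n := by
  induction n with
  | zero => simpa using weyl_rel k
  | succ n ih =>
    have : Weyl.d k * Weyl.x k ^ (n + 2) = (Weyl.d k * Weyl.x k ^ (n + 1)) * Weyl.x k := by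
      rw [mul_assoc, ← pow_succ]
    rw [this, ih, add_mul, mul_assoc, weyl_rel k, smul_mul_assoc, ← pow_succ]
    rw [mul_add, ← mul_assoc, ← pow_succ, mul_one]
    rw [succ_nsmul (Weyl.x k ^ (n+1)) (n+1)]
    abel

lemma dpow_x (n : ℕ) : Weyl.d k ^ (n + 1) * Weyl.x k
    = Weyl.x k * Weyl.d k ^ (n + 1) + (n + 1) • Weyl.d k ^ n := by
  induction n with
  | zero => simpa using weyl_rel k
  | succ n ih =>
    have : Weyl.d k ^ (n + 2) * Weyl.x k = Weyl.d k * (Weyl.d k ^ (n + 1) * Weyl.x k) := by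
      rw [← mul_assoc, ← pow_succ']
    rw [this, ih, mul_add, mul_smul_comm, ← pow_succ', ← mul_assoc, weyl_rel k, add_mul,
      one_mul, mul_assoc, ← pow_succ', succ_nsmul (Weyl.d k ^ (n+1)) (n+1)]
    abel

lemma weyl_induction {P : Weyl k → Prop}
    (halg : ∀ c : k, P (algebraMap k (Weyl k) c))
    (hx : P (Weyl.x k)) (hd : P (Weyl.d k))
    (hadd : ∀ a b, P a → P b → P (a + b))
    (hmul : ∀ a b, P a → P b → P (a * b)) : ∀ a, P a := by
  intro a
  obtain ⟨f, rfl⟩ := RingQuot.mkAlgHom_surjective k (WeylRel k) a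
  induction f using FreeAlgebra.induction with
  | grade0 r => rw [AlgHom.commutes]; exact halg r
  | grade1 b =>
    cases b
    · rw [← mkRingHom_eq]; exact hx
    · rw [← mkRingHom_eq]; exact hd
  | mul a b ha hb => rw [map_mul]; exact hmul _ _ ha hb
  | add a b ha hb => rw [map_add]; exact hadd _ _ ha hb

lemma xd_mem (i j : ℕ) :
    Weyl.x k ^ i * Weyl.d k ^ j ∈ Submodule.span k (Set.range (xd k)) := by
  apply Submodule.subset_span
  refine ⟨Finsupp.single 0 i + Finsupp.single 1 j, ?_⟩
  rw [xd]
  congr 1 <;> simp [Finsupp.single_apply]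

lemma span_xd : Submodule.span k (Set.range (xd k)) = ⊤ := by
  set S := Submodule.span k (Set.range (xd k)) with hS
  have key : ∀ a : Weyl k, ∀ s ∈ S, a * s ∈ S := by
    apply weyl_induction k (P := fun a => ∀ s ∈ S, a * s ∈ S)
    · intro c s hs
      rw [← Algebra.smul_def]
      exact S.smul_mem c hs
    · intro s hs
      refine Submodule.span_induction ?_ ?_ ?_ ?_ hs
      · rintro _ ⟨m, rfl⟩
        rw [xd, ← mul_assoc, ← pow_succ']
        exact xd_mem k _ _
      · rw [mul_zero]; exact S.zero_mem
      · intro u v _ _ hu hv; rw [mul_add]; exact S.add_mem hu hv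
      · intro c u _ hu; rw [mul_smul_comm]; exact S.smul_mem c hu
    · intro s hs
      refine Submodule.span_induction ?_ ?_ ?_ ?_ hs
      · rintro _ ⟨m, rfl⟩
        rw [xd, ← mul_assoc]
        rcases Nat.eq_zero_or_pos (m 0) with h0 | h0
        · rw [h0, pow_zero, mul_one, ← pow_succ']
          simpa using xd_mem k 0 (m 1 + 1)
        · obtain ⟨i, hi⟩ : ∃ i, m 0 = i + 1 := ⟨m 0 - 1, by omega⟩
          rw [hi, d_xpow, add_mul, smul_mul_assoc, mul_assoc, ← pow_succ']
          exact S.add_mem (xd_mem k _ _) (S.smul_mem _ (xd_mem k _ _))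
      · rw [mul_zero]; exact S.zero_mem
      · intro u v _ _ hu hv; rw [mul_add]; exact S.add_mem hu hv
      · intro c u _ hu; rw [mul_smul_comm]; exact S.smul_mem c hu
    · intro a b ha hb s hs
      rw [add_mul]; exact S.add_mem (ha s hs) (hb s hs)
    · intro a b ha hb s hs
      rw [mul_assoc]; exact ha _ (hb s hs)
  rw [eq_top_iff]
  intro a _
  have h1 : (1 : Weyl k) ∈ S := by
    have := xd_mem k 0 0; simpa using this
  have := key a 1 h1
  rwa [mul_one] at this

lemma ψ_comp_ev : (ψ k).comp (ev k) = LinearMap.id := by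
  apply LinearMap.ext_on (span_xd k)
  rintro _ ⟨m, rfl⟩
  rw [LinearMap.comp_apply, ev_xd, ψ_monomial, one_smul, LinearMap.id_apply]

lemma ψ_ev (a : Weyl k) : ψ k (ev k a) = a := by
  have := congrArg (fun g => g a) (ψ_comp_ev k); simpa using this

lemma ev_injective : Function.Injective (ev k) := by
  intro a b h
  rw [← ψ_ev k a, ← ψ_ev k b, h]

lemma pdL (i : Fin 2) : ∀ f : M k,
    ((pderiv i : Derivation k (M k) (M k)) : M k →ₗ[k] M k) f = pderiv i f :=
  fun _ => rfl

lemma comm_x_map : LinearMap.mulRight k (Weyl.x k) - LinearMap.mulLeft k (Weyl.x k)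
    = (ψ k) ∘ₗ (((pderiv 1 : Derivation k (M k) (M k)) : M k →ₗ[k] M k) ∘ₗ (ev k)) := by
  apply LinearMap.ext_on (span_xd k)
  rintro _ ⟨m, rfl⟩
  rw [LinearMap.sub_apply, LinearMap.mulRight_apply, LinearMap.mulLeft_apply,
    LinearMap.comp_apply, LinearMap.comp_apply, ev_xd, pdL, pderiv_monomial, one_mul,
    ψ_monomial, xd]
  rcases Nat.eq_zero_or_pos (m 1) with h1 | h1
  · rw [xd, h1]
    simp only [pow_zero, mul_one, Finsupp.tsub_apply, Nat.cast_zero, zero_smul]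
    rw [← pow_succ, ← pow_succ']
    exact sub_self _
  · obtain ⟨j, hj⟩ : ∃ j, m 1 = j + 1 := ⟨m 1 - 1, by omega⟩
    have e0 : (m - Finsupp.single 1 1 : Fin 2 →₀ ℕ) 0 = m 0 := by
      simp [Finsupp.tsub_apply, Finsupp.single_apply]
    have e1 : (m - Finsupp.single 1 1 : Fin 2 →₀ ℕ) 1 = j := by
      simp [Finsupp.tsub_apply, hj]
    rw [xd, e0, e1, hj, mul_assoc, dpow_x, mul_add, ← mul_assoc, ← pow_succ, mul_smul_comm,
      ← mul_assoc (Weyl.x k), ← pow_succ', Nat.cast_smul_eq_nsmul]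
    abel

lemma comm_x (a : Weyl k) :
    a * Weyl.x k - Weyl.x k * a = ψ k (pderiv 1 (ev k a)) := by
  have := congrArg (fun g => g a) (comm_x_map k)
  simpa using this

lemma comm_d_map : LinearMap.mulLeft k (Weyl.d k) - LinearMap.mulRight k (Weyl.d k)
    = (ψ k) ∘ₗ (((pderiv 0 : Derivation k (M k) (M k)) : M k →ₗ[k] M k) ∘ₗ (ev k)) := by
  apply LinearMap.ext_on (span_xd k)
  rintro _ ⟨m, rfl⟩
  rw [LinearMap.sub_apply, LinearMap.mulRight_apply, LinearMap.mulLeft_apply,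
    LinearMap.comp_apply, LinearMap.comp_apply, ev_xd, pdL, pderiv_monomial, one_mul,
    ψ_monomial, xd]
  rcases Nat.eq_zero_or_pos (m 0) with h1 | h1
  · rw [xd, h1]
    simp only [pow_zero, one_mul, Finsupp.tsub_apply, Nat.cast_zero, zero_smul]
    rw [← pow_succ', ← pow_succ]
    exact sub_self _
  · obtain ⟨i, hi⟩ : ∃ i, m 0 = i + 1 := ⟨m 0 - 1, by omega⟩
    have e0 : (m - Finsupp.single 0 1 : Fin 2 →₀ ℕ) 0 = i := by
      simp [Finsupp.tsub_apply, hi]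
    have e1 : (m - Finsupp.single 0 1 : Fin 2 →₀ ℕ) 1 = m 1 := by
      simp [Finsupp.tsub_apply, Finsupp.single_apply]
    rw [xd, e0, e1, hi, ← mul_assoc, d_xpow, add_mul, smul_mul_assoc, mul_assoc, ← pow_succ',
      mul_assoc (Weyl.x k ^ (i + 1)), ← pow_succ, Nat.cast_smul_eq_nsmul]
    abel

lemma comm_d (a : Weyl k) :
    Weyl.d k * a - a * Weyl.d k = ψ k (pderiv 0 (ev k a)) := by
  have := congrArg (fun g => g a) (comm_d_map k)
  simpa using this

lemma mem_center_iff_ev (a : Weyl k) :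
    a ∈ Subalgebra.center k (Weyl k) ↔ pderiv 0 (ev k a) = 0 ∧ pderiv 1 (ev k a) = 0 := by
  constructor
  · intro ha
    have h := Subalgebra.mem_center_iff.mp ha
    constructor
    · apply ψ_injective k
      rw [map_zero, ← comm_d, h (Weyl.d k), sub_self]
    · apply ψ_injective k
      rw [map_zero, ← comm_x, ← h (Weyl.x k), sub_self]
  · rintro ⟨h0, h1⟩
    have hx' : a * Weyl.x k = Weyl.x k * a := by
      apply sub_eq_zero.mp
      rw [comm_x k a, h1, map_zero]
    have hd' : Weyl.d k * a = a * Weyl.d k := by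
      apply sub_eq_zero.mp
      rw [comm_d k a, h0, map_zero]
    apply Subalgebra.mem_center_iff.mpr
    apply weyl_induction k (P := fun b => b * a = a * b)
    · intro c; exact Algebra.commutes c a
    · exact hx'.symm
    · exact hd'
    · intro u v hu hv; rw [add_mul, mul_add, hu, hv]
    · intro u v hu hv; rw [mul_assoc, hv, ← mul_assoc, hu, mul_assoc]

lemma ev_xpow (n : ℕ) : ev k (Weyl.x k ^ n) = X 0 ^ n := by
  have h := ev_xd k (Finsupp.single 0 n)
  rw [xd] at h
  simp only [Finsupp.single_eq_same, Finsupp.single_eq_of_ne' (by decide : (0 : Fin 2) ≠ 1),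
    pow_zero, mul_one] at h
  rw [h, X_pow_eq_monomial]

lemma ev_dpow (n : ℕ) : ev k (Weyl.d k ^ n) = X 1 ^ n := by
  have h := ev_xd k (Finsupp.single 1 n)
  rw [xd] at h
  simp only [Finsupp.single_eq_same, Finsupp.single_eq_of_ne' (by decide : (1 : Fin 2) ≠ 0),
    pow_zero, one_mul] at h
  rw [h, X_pow_eq_monomial]

lemma pderiv_eq_zero_coeff {i : Fin 2} {f : M k} (h : pderiv i f = 0) (m : Fin 2 →₀ ℕ) :
    (m i : k) * coeff m f = 0 := by
  rcases Nat.eq_zero_or_pos (m i) with h0 | h0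
  · rw [h0, Nat.cast_zero, zero_mul]
  have key : coeff (m - Finsupp.single i 1) (pderiv i f) = coeff m f * (m i : k) := by
    conv_lhs => rw [as_sum f]
    rw [map_sum, coeff_sum]
    simp_rw [pderiv_monomial]
    rw [Finset.sum_eq_single m]
    · rw [coeff_monomial, if_pos rfl]
    · intro b hb hbm
      rw [coeff_monomial]
      rcases Nat.eq_zero_or_pos (b i) with hb0 | hb0
      · rw [hb0]; simp
      · rw [if_neg]
        · intro hEq
          apply hbm
          ext j
          have hj := DFunLike.congr_fun hEq j
          rw [Finsupp.tsub_apply, Finsupp.tsub_apply] at hj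
          rcases eq_or_ne j i with rfl | hne
          · rw [Finsupp.single_eq_same] at hj; omega
          · rw [Finsupp.single_eq_of_ne' (Ne.symm hne)] at hj; omega
    · intro hm
      rw [coeff_monomial, if_pos rfl, notMem_support_iff.mp hm, zero_mul]
  rw [h, coeff_zero] at key
  rw [mul_comm]
  exact key.symm

lemma B_pow_Xpow (j n : ℕ) : ((B k) ^ j) (X 0 ^ n) = (n.descFactorial j) • X 0 ^ (n - j) := by
  induction j with
  | zero => simp
  | succ j ih =>
    rw [pow_succ', Module.End.mul_apply, ih, map_nsmul, B_apply, Derivation.leibniz_pow,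
      pderiv_X_self, smul_eq_mul, mul_one, smul_smul, Nat.sub_sub, mul_comm,
      ← Nat.descFactorial_succ]

lemma commute_A1B : Commute (LinearMap.mulLeft k (X 1) : Module.End k (M k)) (B k) := by
  apply LinearMap.ext
  intro f
  simp only [Module.End.mul_apply, LinearMap.mulLeft_apply, B_apply]
  rw [Derivation.leibniz, pderiv_X_of_ne (by decide)]
  simp [smul_eq_mul]

lemma Dop_pow_Xpow (n : ℕ) : ((Dop k) ^ n) (X 0 ^ n) =
    ∑ m ∈ Finset.range (n + 1),
      (n.choose m * n.descFactorial (n - m)) • (X 0 ^ m * X 1 ^ m) := by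
  rw [show Dop k = LinearMap.mulLeft k (X 1) + B k from rfl, (commute_A1B k).add_pow,
    LinearMap.sum_apply]
  apply Finset.sum_congr rfl
  intro m hm
  have hm' : m ≤ n := Nat.lt_succ_iff.mp (Finset.mem_range.mp hm)
  rw [Module.End.mul_apply, Module.End.mul_apply, Module.End.natCast_apply, map_nsmul,
    B_pow_Xpow, Nat.sub_sub_self hm', map_nsmul, map_nsmul,
    show ((LinearMap.mulLeft k (X 1) : Module.End k (M k)) ^ m)
      = LinearMap.mulLeft k (X 1 ^ m) from LinearMap.pow_mulLeft k (M k) _ _,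
    LinearMap.mulLeft_apply,
    smul_smul, mul_comm (X 1 ^ m)]

lemma expand_monomial_smul (p : ℕ) (m : Fin 2 →₀ ℕ) (c : k) :
    expand p (monomial m c) = monomial (p • m) c := by
  have h0 : (p • m : Fin 2 →₀ ℕ) 0 = p * m 0 := by
    rw [Finsupp.smul_apply, smul_eq_mul]
  have h1 : (p • m : Fin 2 →₀ ℕ) 1 = p * m 1 := by
    rw [Finsupp.smul_apply, smul_eq_mul]
  rw [monomial_fin2, map_mul, map_mul, expand_C, map_pow, map_pow, expand_X, expand_X,
    monomial_fin2 k (p • m), h0, h1, pow_mul, pow_mul]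

lemma coeff_expand_psmul (p : ℕ) (hp : 0 < p) (f : M k) (m : Fin 2 →₀ ℕ) :
    coeff (p • m) (expand p f) = coeff m f := by
  conv_lhs => rw [as_sum f]
  rw [map_sum, coeff_sum]
  simp_rw [expand_monomial_smul]
  have hcongr : ∀ b ∈ f.support, coeff (p • m) (monomial (p • b) (coeff b f))
      = if b = m then coeff b f else 0 := by
    intro b _
    rw [coeff_monomial]
    refine if_congr ⟨fun h => ?_, fun h => by rw [h]⟩ rfl rfl
    ext j
    have hj := DFunLike.congr_fun h j
    rw [Finsupp.smul_apply, Finsupp.smul_apply, smul_eq_mul, smul_eq_mul] at hj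
    exact Nat.eq_of_mul_eq_mul_left hp hj
  rw [Finset.sum_congr rfl hcongr, Finset.sum_ite_eq' f.support m (fun b => coeff b f)]
  split
  · rfl
  · next h => rw [notMem_support_iff.mp h]

section CharP

variable (p : ℕ) [Fact p.Prime]

lemma xp_central : Weyl.x (ZMod p) ^ p ∈ Subalgebra.center (ZMod p) (Weyl (ZMod p)) := by
  rw [mem_center_iff_ev, ev_xpow]
  constructor
  · rw [Derivation.leibniz_pow, ← Nat.cast_smul_eq_nsmul (ZMod p), ZMod.natCast_self, zero_smul]
  · rw [Derivation.leibniz_pow, pderiv_X_of_ne (by decide)]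
    simp

lemma dp_central : Weyl.d (ZMod p) ^ p ∈ Subalgebra.center (ZMod p) (Weyl (ZMod p)) := by
  rw [mem_center_iff_ev, ev_dpow]
  constructor
  · rw [Derivation.leibniz_pow, pderiv_X_of_ne (by decide)]
    simp
  · rw [Derivation.leibniz_pow, ← Nat.cast_smul_eq_nsmul (ZMod p), ZMod.natCast_self, zero_smul]

lemma exists_expand_eq {f : M (ZMod p)} (h0 : pderiv 0 f = 0) (h1 : pderiv 1 f = 0) :
    ∃ g : M (ZMod p), expand p g = f := by
  have hdvd : ∀ m ∈ f.support, ∀ i : Fin 2, p ∣ m i := by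
    intro m hm i
    have hz : (m i : ZMod p) * coeff m f = 0 := by
      fin_cases i
      · exact pderiv_eq_zero_coeff (ZMod p) h0 m
      · exact pderiv_eq_zero_coeff (ZMod p) h1 m
    have hc : coeff m f ≠ 0 := mem_support_iff.mp hm
    have hmi : (m i : ZMod p) = 0 := by
      rcases mul_eq_zero.mp hz with h | h
      · exact h
      · exact absurd h hc
    exact (ZMod.natCast_eq_zero_iff _ _).mp hmi
  refine ⟨∑ m ∈ f.support, monomial (Finsupp.mapRange (· / p) (by simp) m) (coeff m f), ?_⟩
  rw [map_sum]
  conv_rhs => rw [as_sum f]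
  apply Finset.sum_congr rfl
  intro m hm
  rw [expand_monomial_smul]
  have hsm : p • Finsupp.mapRange (· / p) (by simp) m = m := by
    ext j
    rw [Finsupp.smul_apply, Finsupp.mapRange_apply, smul_eq_mul,
      Nat.mul_div_cancel' (hdvd m hm j)]
  rw [hsm]

lemma center_iso :
    ∃ e : MvPolynomial (Fin 2) (ZMod p) ≃ₐ[ZMod p]
        Subalgebra.center (ZMod p) (Weyl (ZMod p)),
      (e (X 0) : Weyl (ZMod p)) = Weyl.x (ZMod p) ^ p ∧
      (e (X 1) : Weyl (ZMod p)) = Weyl.d (ZMod p) ^ p := by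
  set Ctr := Subalgebra.center (ZMod p) (Weyl (ZMod p)) with hCtr
  set cx : Ctr := ⟨Weyl.x (ZMod p) ^ p, xp_central p⟩ with hcx
  set cd : Ctr := ⟨Weyl.d (ZMod p) ^ p, dp_central p⟩ with hcd
  set Φ : MvPolynomial (Fin 2) (ZMod p) →ₐ[ZMod p] Ctr := aeval ![cx, cd] with hΦ
  have hΦX0 : Φ (X 0) = cx := by rw [hΦ, aeval_X]; simp
  have hΦX1 : Φ (X 1) = cd := by rw [hΦ, aeval_X]; simp
  have hval : ∀ f, ev (ZMod p) ((Φ f : Weyl (ZMod p))) = expand p f := by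
    intro f
    induction f using MvPolynomial.induction_on' with
    | monomial m c =>
      have h1 : Φ (monomial m c) = algebraMap _ _ c * (cx ^ (m 0) * cd ^ (m 1)) := by
        rw [monomial_fin2 (ZMod p) m c, map_mul, map_mul, map_pow, map_pow, hΦX0, hΦX1,
          show Φ (C c) = algebraMap (ZMod p) Ctr c from aeval_C _ c]
      have h2 : ((Φ (monomial m c) : Weyl (ZMod p))) = c • xd (ZMod p) (p • m) := by
        rw [h1]
        push_cast
        rw [xd, Finsupp.smul_apply, Finsupp.smul_apply, smul_eq_mul, smul_eq_mul,
          pow_mul, pow_mul, Algebra.smul_def]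
      rw [h2, map_smul, ev_xd, expand_monomial_smul, smul_monomial, smul_eq_mul, mul_one]
    | add f g hf hg =>
      rw [map_add, AddMemClass.coe_add, map_add, map_add, hf, hg]
  have hinj : Function.Injective Φ := by
    intro f g hfg
    have h2 : expand p f = expand p g := by rw [← hval, ← hval, hfg]
    apply MvPolynomial.ext
    intro m
    rw [← coeff_expand_psmul (ZMod p) p (Fact.out (p := p.Prime)).pos f m,
      ← coeff_expand_psmul (ZMod p) p (Fact.out (p := p.Prime)).pos g m, h2]
  have hsurj : Function.Surjective Φ := by
    rintro ⟨a, ha⟩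
    obtain ⟨h0, h1⟩ := (mem_center_iff_ev (ZMod p) a).mp ha
    obtain ⟨g, hg⟩ := exists_expand_eq p h0 h1
    refine ⟨g, ?_⟩
    apply Subtype.ext
    apply ev_injective (ZMod p)
    rw [hval, hg]
  refine ⟨AlgEquiv.ofBijective Φ ⟨hinj, hsurj⟩, ?_, ?_⟩
  · show ((Φ (X 0) : Ctr) : Weyl (ZMod p)) = _
    rw [hΦX0]
  · show ((Φ (X 1) : Ctr) : Weyl (ZMod p)) = _
    rw [hΦX1]

end CharP

lemma ev_comm_pow (n : ℕ) :
    ev k (Weyl.d k ^ n * Weyl.x k ^ n - Weyl.x k ^ n * Weyl.d k ^ n)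
      = ∑ m ∈ Finset.range n,
          (n.choose m * n.descFactorial (n - m)) • (X 0 ^ m * X 1 ^ m) := by
  rw [map_sub, ev_mul, ev_mul, map_pow (φ k), map_pow (φ k), φ_d, φ_x, ev_xpow, ev_dpow,
    Dop_pow_Xpow,
    show ((A k) ^ n) = LinearMap.mulLeft k (X 0 ^ n) from LinearMap.pow_mulLeft k (M k) _ _,
    LinearMap.mulLeft_apply, Finset.sum_range_succ, Nat.choose_self, Nat.sub_self,
    Nat.descFactorial_zero, mul_one, one_smul, add_sub_cancel_right]

lemma int_main (p : ℕ) (hp : p.Prime) :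
    (∃ u : Weyl ℤ,
      Weyl.d ℤ ^ p * Weyl.x ℤ ^ p - Weyl.x ℤ ^ p * Weyl.d ℤ ^ p = (p : Weyl ℤ) * u) ∧
    (∀ u : Weyl ℤ,
      Weyl.d ℤ ^ p * Weyl.x ℤ ^ p - Weyl.x ℤ ^ p * Weyl.d ℤ ^ p = (p : Weyl ℤ) * u →
      ∃ y : Weyl ℤ, u - (-1) = (p : Weyl ℤ) * y) := by
  haveI : Fact p.Prime := ⟨hp⟩
  set a : Weyl ℤ := Weyl.d ℤ ^ p * Weyl.x ℤ ^ p - Weyl.x ℤ ^ p * Weyl.d ℤ ^ p with ha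
  obtain ⟨q, hq⟩ : ∃ q, p = q + 1 := ⟨p - 1, by have := hp.pos; omega⟩
  have hdvd : ∀ m, m < p → p ∣ p.choose m * p.descFactorial (p - m) := by
    intro m hm
    rcases Nat.eq_zero_or_pos m with rfl | hm0
    · rw [Nat.choose_zero_right, one_mul, Nat.sub_zero, Nat.descFactorial_self]
      exact Nat.dvd_factorial hp.pos le_rfl
    · exact Dvd.dvd.mul_right (hp.dvd_choose_self (by omega : m ≠ 0) hm) _
  have hcE : ∀ m, m < p → p.choose m * p.descFactorial (p - m)
      = p * ((p.choose m * p.descFactorial (p - m)) / p) :=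
    fun m hm => (Nat.mul_div_cancel' (hdvd m hm)).symm
  set E : ℕ → ℕ := fun m => (p.choose m * p.descFactorial (p - m)) / p with hE
  set g₀ : MvPolynomial (Fin 2) ℤ :=
    ∑ m ∈ Finset.range p, (E m) • (X 0 ^ m * X 1 ^ m) with hg₀
  have hfg : ev ℤ a = p • g₀ := by
    rw [ha, ev_comm_pow, hg₀, Finset.smul_sum]
    apply Finset.sum_congr rfl
    intro m hm
    rw [smul_smul, ← hcE m (Finset.mem_range.mp hm)]
  set u₀ := ψ ℤ g₀ with hu₀
  have ha_pu : a = (p : Weyl ℤ) * u₀ := by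
    conv_lhs => rw [← ψ_ev ℤ a]
    rw [hfg, map_nsmul, nsmul_eq_mul]
  refine ⟨⟨u₀, ha_pu⟩, ?_⟩
  intro u hu
  have huu : u = u₀ := by
    have h0 : (p : Weyl ℤ) * (u - u₀) = 0 := by rw [mul_sub, ← hu, ← ha_pu, sub_self]
    have h1 : ev ℤ ((p : Weyl ℤ) * (u - u₀)) = (p : ℤ) • ev ℤ (u - u₀) := by
      rw [ev_mul, map_natCast (φ ℤ), Module.End.natCast_apply, ← Nat.cast_smul_eq_nsmul ℤ]
    rw [h0, map_zero] at h1
    have h2 : ev ℤ (u - u₀) = 0 := by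
      have h3 := h1.symm
      rw [smul_eq_C_mul] at h3
      rcases mul_eq_zero.mp h3 with h4 | h4
      · exfalso
        apply hp.ne_zero
        have : ((p : ℤ)) = 0 := C_injective (Fin 2) ℤ (by rw [h4, map_zero])
        exact_mod_cast this
      · exact h4
    have h5 : u - u₀ = 0 := ev_injective ℤ (by rw [h2, map_zero])
    rw [sub_eq_zero] at h5
    exact h5
  have hdvdE : ∀ m, 1 ≤ m → m < p → p ∣ E m := by
    intro m h1m hmp
    obtain ⟨t, ht⟩ := hp.dvd_choose_self (by omega : m ≠ 0) hmp
    have hdesc : p ∣ p.descFactorial (p - m) := by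
      obtain ⟨s, hs⟩ : ∃ s, p - m = s + 1 := ⟨p - m - 1, by omega⟩
      rw [hs, hq, Nat.succ_descFactorial_succ, ← hq]
      exact dvd_mul_right p _
    have hEm : E m = t * p.descFactorial (p - m) := by
      rw [hE]
      dsimp only
      rw [ht, mul_assoc, Nat.mul_div_cancel_left _ hp.pos]
    rw [hEm]
    exact Dvd.dvd.mul_left hdesc t
  have hE0 : E 0 = q.factorial := by
    rw [hE]
    dsimp only
    rw [Nat.choose_zero_right, one_mul, Nat.sub_zero, hq, Nat.descFactorial_self,
      Nat.factorial_succ, Nat.mul_div_cancel_left _ (by omega : 0 < q + 1)]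
  have hwilson : p ∣ E 0 + 1 := by
    rw [hE0, ← ZMod.natCast_eq_zero_iff]
    push_cast
    have hw : ((q.factorial : ZMod p)) = -1 := by
      have hwl := ZMod.wilsons_lemma (p := p)
      rwa [show p - 1 = q by omega] at hwl
    rw [hw]
    ring
  set hpoly : MvPolynomial (Fin 2) ℤ :=
    (∑ m ∈ Finset.range q, ((E (m + 1)) / p) • (X 0 ^ (m + 1) * X 1 ^ (m + 1)))
      + ((E 0 + 1) / p) • 1 with hhp
  have hg1 : g₀ + 1 = p • hpoly := by
    rw [hg₀, show Finset.range p = Finset.range (q + 1) from by rw [hq],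
      Finset.sum_range_succ', hhp, smul_add, Finset.smul_sum]
    simp only [pow_zero, mul_one]
    rw [add_assoc]
    congr 1
    · apply Finset.sum_congr rfl
      intro m hm
      rw [smul_smul, Nat.mul_div_cancel' (hdvdE (m + 1) (by omega)
        (by have := Finset.mem_range.mp hm; omega))]
    · rw [smul_smul, Nat.mul_div_cancel' hwilson, add_nsmul, one_nsmul]
  refine ⟨ψ ℤ hpoly, ?_⟩
  have hψ1 : ψ ℤ (1 : M ℤ) = 1 := by
    have hm1 : (1 : M ℤ) = monomial 0 1 := by rw [monomial_zero']; rw [map_one]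
    rw [hm1, ψ_monomial, Algebra.smul_def]
    simp [xd]
  rw [huu, sub_neg_eq_add, hu₀, show (1 : Weyl ℤ) = ψ ℤ 1 from hψ1.symm, ← map_add, hg1,
    map_nsmul, nsmul_eq_mul]
end WeylAux
end

/-- Let `W` be the Weyl algebra over `ℤ`, a flat `ℤ`-algebra with
`W/pW = A₁(𝔽_p)`, whose center is `𝔽_p[x^p, ∂^p]`, carrying the mod-`p`-reduction Poisson
bracket `{a,b} = (1/p)[z,w] mod p` for lifts `z, w ∈ W`.  Then `{∂^p, x^p} = -1`:
the commutator `[∂^p, x^p]` in `W` is `p·u` with `u ≡ -1 (mod p)`.  Hence the center,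
with this bracket, is isomorphic as a Poisson algebra to the polynomial ring `k[X, Y]`
(the coordinate ring of the cotangent bundle, via `X ↦ x^p`, `Y ↦ ∂^p`) with the negative
of the standard symplectic bracket `{Y, X} = 1`. -/
theorem statement7 (p : ℕ) (hp : p.Prime) :
    (∃ u : Weyl ℤ,
      Weyl.d ℤ ^ p * Weyl.x ℤ ^ p - Weyl.x ℤ ^ p * Weyl.d ℤ ^ p = (p : Weyl ℤ) * u) ∧
    (∀ u : Weyl ℤ,
      Weyl.d ℤ ^ p * Weyl.x ℤ ^ p - Weyl.x ℤ ^ p * Weyl.d ℤ ^ p = (p : Weyl ℤ) * u →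
      ∃ y : Weyl ℤ, u - (-1) = (p : Weyl ℤ) * y) ∧
    ∃ e : MvPolynomial (Fin 2) (ZMod p) ≃ₐ[ZMod p]
        Subalgebra.center (ZMod p) (Weyl (ZMod p)),
      (e (MvPolynomial.X 0) : Weyl (ZMod p)) = Weyl.x (ZMod p) ^ p ∧
      (e (MvPolynomial.X 1) : Weyl (ZMod p)) = Weyl.d (ZMod p) ^ p := by
  haveI : Fact p.Prime := ⟨hp⟩
  obtain ⟨h1, h2⟩ := WeylAux.int_main p hp
  exact ⟨h1, h2, WeylAux.center_iso p⟩
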